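/- arXiv:2509.13745 — 6 statements merged into one kernel-verified Lean document; each statement's English description precedes it below -/
import Mathlib

section
/- With α = 0, the LOP-ℓ2/ℓ1 penalty satisfies ψ₀(x) = √N · ‖x‖₂ for every x ∈ ℝ^N. -/
open scoped ENNReal

noncomputable def phi (x σ : ℝ) : ℝ≥0∞ :=
  if 0 < σ then ENNReal.ofReal (x ^ 2 / (2 * σ) + σ / 2)
  else if x = 0 ∧ σ = 0 then 0 else ⊤

/-- ℓ1 norm of the first-order difference Dσ. -/
noncomputable def tv {N : ℕ} (σ : Fin N → ℝ) : ℝ :=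
  ∑ i : Fin (N - 1),
    |σ ⟨i.val + 1, by have := i.isLt; omega⟩ - σ ⟨i.val, by have := i.isLt; omega⟩|

/-- The LOP-ℓ2/ℓ1 penalty. -/
noncomputable def psi {N : ℕ} (α : ℝ) (x : Fin N → ℝ) : ℝ≥0∞ :=
  ⨅ (σ : Fin N → ℝ) (_ : tv σ ≤ α), ∑ n : Fin N, phi (x n) (σ n)

lemma tv_const {N : ℕ} (c : ℝ) : tv (fun _ : Fin N => c) = 0 := by
  simp [tv]

lemma tv_nonpos_const {N : ℕ} (σ : Fin N → ℝ) (h : tv σ ≤ 0) (hN : 0 < N) :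
    ∀ m (hm : m < N), σ ⟨m, hm⟩ = σ ⟨0, hN⟩ := by
  have hz : tv σ = 0 :=
    le_antisymm h (Finset.sum_nonneg fun i _ => abs_nonneg _)
  have hstep : ∀ i : Fin (N - 1),
      σ ⟨i.val + 1, by have := i.isLt; omega⟩ = σ ⟨i.val, by have := i.isLt; omega⟩ := by
    intro i
    have := (Finset.sum_eq_zero_iff_of_nonneg (fun i _ => abs_nonneg _)).mp hz i
      (Finset.mem_univ i)
    have := abs_eq_zero.mp this
    linarith [sub_eq_zero.mp this]
  intro m
  induction m with
  | zero => intro hm; rfl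
  | succ m ih =>
    intro hm
    have hm' : m < N := by omega
    have hlt : m < N - 1 := by omega
    have := hstep ⟨m, hlt⟩
    simp only at this
    rw [show (⟨m + 1, hm⟩ : Fin N) = ⟨m + 1, by omega⟩ from rfl, this]
    exact ih hm'

/-- ψ₀(x) = √N · ‖x‖₂ for every x ∈ ℝ^N. -/
theorem psi_zero_eq (N : ℕ) (x : Fin N → ℝ) :
    psi 0 x = ENNReal.ofReal (Real.sqrt N * Real.sqrt (∑ n : Fin N, x n ^ 2)) := by
  set S : ℝ := ∑ n : Fin N, x n ^ 2 with hSdef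
  have hS : 0 ≤ S := Finset.sum_nonneg fun i _ => sq_nonneg _
  rcases Nat.eq_zero_or_pos N with hN0 | hN
  · subst hN0
    simp [psi, tv, hSdef]
  apply le_antisymm
  · -- upper bound
    rcases eq_or_lt_of_le hS with hS0 | hSpos
    · -- S = 0 : all x n = 0, take σ = 0
      have hx : ∀ n : Fin N, x n = 0 := by
        intro n
        have := (Finset.sum_eq_zero_iff_of_nonneg
          (fun i (_ : i ∈ Finset.univ) => sq_nonneg (x i))).mp hS0.symm n (Finset.mem_univ n)
        exact pow_eq_zero_iff (n := 2) (by norm_num) |>.mp this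
      have h1 : psi 0 x ≤ ∑ n : Fin N, phi (x n) 0 := by
        refine iInf_le_of_le (fun _ => 0) (iInf_le_of_le ?_ le_rfl)
        simp [tv_const]
      have h2 : ∑ n : Fin N, phi (x n) 0 = 0 := by
        apply Finset.sum_eq_zero
        intro n _
        simp [phi, hx n]
      rw [h2] at h1
      exact h1.trans zero_le
    · -- S > 0 : take σ = const c, c = sqrt (S / N)
      set c : ℝ := Real.sqrt (S / N) with hcdef
      have hNpos : (0 : ℝ) < N := by exact_mod_cast hN
      have hc : 0 < c := Real.sqrt_pos.mpr (div_pos hSpos hNpos)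
      have hc2 : c ^ 2 = S / N := Real.sq_sqrt (le_of_lt (div_pos hSpos hNpos))
      have hSc : S = N * c ^ 2 := by
        field_simp at hc2
        linarith [hc2]
      have h1 : psi 0 x ≤ ∑ n : Fin N, phi (x n) c := by
        refine iInf_le_of_le (fun _ => c) (iInf_le_of_le ?_ le_rfl)
        simp [tv_const]
      have h2 : ∑ n : Fin N, phi (x n) c
          = ENNReal.ofReal (∑ n : Fin N, (x n ^ 2 / (2 * c) + c / 2)) := by
        rw [ENNReal.ofReal_sum_of_nonneg]
        · exact Finset.sum_congr rfl fun n _ => by simp [phi, hc]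
        · intro n _
          positivity
      have h3 : ∑ n : Fin N, (x n ^ 2 / (2 * c) + c / 2) = S / (2 * c) + N * c / 2 := by
        rw [Finset.sum_add_distrib, ← Finset.sum_div, Finset.sum_const]
        simp [hSdef]
        ring
      have h4 : S / (2 * c) + N * c / 2 = Real.sqrt N * Real.sqrt S := by
        have hsN : Real.sqrt N * Real.sqrt N = (N : ℝ) := Real.mul_self_sqrt hNpos.le
        have hsS : Real.sqrt S = Real.sqrt N * c := by
          rw [hSc, Real.sqrt_mul hNpos.le, Real.sqrt_sq hc.le]
        rw [hsS, hSc]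
        field_simp
        nlinarith [hsN, hc, Real.sqrt_nonneg (N : ℝ)]
      rw [h2, h3, h4] at h1
      exact h1
  · -- lower bound
    rw [psi]
    refine le_iInf fun σ => le_iInf fun hσ => ?_
    set c : ℝ := σ ⟨0, hN⟩ with hcdef
    have hconst : ∀ n : Fin N, σ n = c := by
      intro n
      have := tv_nonpos_const σ hσ hN n.val n.isLt
      simpa using this
    rcases lt_trichotomy c 0 with hc | hc | hc
    · -- c < 0 : some term is ⊤
      have hterm : phi (x ⟨0, hN⟩) (σ ⟨0, hN⟩) = ⊤ := by
        rw [hconst]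
        simp [phi, not_lt.mpr hc.le, hc.ne]
      calc ENNReal.ofReal (Real.sqrt N * Real.sqrt S) ≤ ⊤ := le_top
        _ = phi (x ⟨0, hN⟩) (σ ⟨0, hN⟩) := hterm.symm
        _ ≤ ∑ n : Fin N, phi (x n) (σ n) :=
            Finset.single_le_sum (f := fun n : Fin N => phi (x n) (σ n)) (fun i _ => zero_le) (Finset.mem_univ _)
    · -- c = 0
      by_cases hx : ∀ n : Fin N, x n = 0
      · have : S = 0 := Finset.sum_eq_zero fun n _ => by simp [hx n]
        rw [this]
        simp
      · push_neg at hx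
        obtain ⟨n, hn⟩ := hx
        have hterm : phi (x n) (σ n) = ⊤ := by
          rw [hconst, hc]
          simp [phi, hn]
        calc ENNReal.ofReal (Real.sqrt N * Real.sqrt S) ≤ ⊤ := le_top
          _ = phi (x n) (σ n) := hterm.symm
          _ ≤ ∑ n : Fin N, phi (x n) (σ n) :=
              Finset.single_le_sum (f := fun n : Fin N => phi (x n) (σ n)) (fun i _ => zero_le) (Finset.mem_univ _)
    · -- c > 0 : AM-GM
      have h2 : ∑ n : Fin N, phi (x n) (σ n)
          = ENNReal.ofReal (∑ n : Fin N, (x n ^ 2 / (2 * c) + c / 2)) := by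
        rw [ENNReal.ofReal_sum_of_nonneg]
        · exact Finset.sum_congr rfl fun n _ => by simp [phi, hconst n, hc]
        · intro n _
          positivity
      have h3 : ∑ n : Fin N, (x n ^ 2 / (2 * c) + c / 2) = S / (2 * c) + N * c / 2 := by
        rw [Finset.sum_add_distrib, ← Finset.sum_div, Finset.sum_const]
        simp [hSdef]
        ring
      rw [h2, h3]
      apply ENNReal.ofReal_le_ofReal
      have hkey : S / (2 * c) + N * c / 2 = (S + N * c ^ 2) / (2 * c) := by
        field_simp
      rw [hkey, le_div_iff₀ (by positivity)]
      nlinarith [sq_nonneg (Real.sqrt S - Real.sqrt N * c),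
        Real.sq_sqrt hS, Real.sq_sqrt (Nat.cast_nonneg N : (0:ℝ) ≤ N),
        Real.sqrt_nonneg S, Real.sqrt_nonneg (N : ℝ), hc]
end

section
/- For every x ∈ ℝ^N and every α ≥ 0, ‖x‖₁ ≤ ψ_α(x) ≤ √N · ‖x‖₂. -/
open scoped ENNReal

lemma abs_le_phi (x σ : ℝ) : ENNReal.ofReal |x| ≤ phi x σ := by
  unfold phi
  split_ifs with h1 h2
  · apply ENNReal.ofReal_le_ofReal
    rw [div_add_div _ _ (by positivity) (by norm_num), le_div_iff₀ (by positivity)]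
    nlinarith [sq_nonneg (|x| - σ), sq_abs x]
  · simp [h2.1]
  · exact le_top

/-- ‖x‖₁ ≤ ψ_α(x) ≤ √N·‖x‖₂ for every x and every α ≥ 0. -/
theorem psi_bounds (N : ℕ) (x : Fin N → ℝ) (α : ℝ) (hα : 0 ≤ α) :
    ENNReal.ofReal (∑ n : Fin N, |x n|) ≤ psi α x ∧
      psi α x ≤ ENNReal.ofReal (Real.sqrt N * Real.sqrt (∑ n : Fin N, x n ^ 2)) := by
  constructor
  · apply le_iInf₂
    intro σ _
    calc ENNReal.ofReal (∑ n : Fin N, |x n|)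
        = ∑ n : Fin N, ENNReal.ofReal |x n| := by
          rw [ENNReal.ofReal_sum_of_nonneg (fun n _ => abs_nonneg _)]
      _ ≤ ∑ n : Fin N, phi (x n) (σ n) :=
          Finset.sum_le_sum fun n _ => abs_le_phi _ _
  · by_cases hT : (∑ n : Fin N, x n ^ 2) = 0
    · have hx : ∀ n, x n = 0 := by
        intro n
        have := (Finset.sum_eq_zero_iff_of_nonneg (fun i _ => sq_nonneg (x i))).1 hT n
          (Finset.mem_univ n)
        nlinarith
      calc psi α x ≤ ∑ n : Fin N, phi (x n) ((fun _ => (0:ℝ)) n) := by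
            apply iInf₂_le
            simp [tv, hα]
        _ = 0 := by simp [phi, hx]
        _ ≤ _ := zero_le
    · have hN : 0 < N := by
        rcases Nat.eq_zero_or_pos N with h | h
        · subst h; simp at hT
        · exact h
      set T := ∑ n : Fin N, x n ^ 2 with hTdef
      have hT0 : 0 < T := lt_of_le_of_ne (Finset.sum_nonneg fun i _ => sq_nonneg _) (Ne.symm hT)
      set S := Real.sqrt T with hS
      have hS0 : 0 < S := Real.sqrt_pos.2 hT0
      have hSN : 0 < Real.sqrt N := Real.sqrt_pos.2 (by exact_mod_cast hN)
      set c := S / Real.sqrt N with hc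
      have hc0 : 0 < c := div_pos hS0 hSN
      have key : psi α x ≤ ∑ n : Fin N, phi (x n) ((fun _ => c) n) := by
        apply iInf₂_le
        simp [tv, hα]
      refine key.trans ?_
      have : ∑ n : Fin N, phi (x n) c
          = ENNReal.ofReal (∑ n : Fin N, (x n ^ 2 / (2 * c) + c / 2)) := by
        rw [ENNReal.ofReal_sum_of_nonneg (fun n _ => by positivity)]
        exact Finset.sum_congr rfl fun n _ => by simp [phi, hc0]
      rw [this]
      apply ENNReal.ofReal_le_ofReal
      have hsum : ∑ n : Fin N, (x n ^ 2 / (2 * c) + c / 2)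
          = T / (2 * c) + N * (c / 2) := by
        rw [Finset.sum_add_distrib, ← Finset.sum_div, Finset.sum_const, Finset.card_univ,
          Fintype.card_fin, nsmul_eq_mul]
      rw [hsum]
      have hSq : S ^ 2 = T := Real.sq_sqrt hT0.le
      have hNq : Real.sqrt N ^ 2 = (N : ℝ) := Real.sq_sqrt (by positivity)
      have : T / (2 * c) + N * (c / 2) = Real.sqrt N * S := by
        rw [hc]
        field_simp
        nlinarith [hSq, hNq, hS0, hSN]
      rw [this]
end

section
/- For every α ≥ 0, the LOP-ℓ2/ℓ1 penalty ψ_α is a convex function on ℝ^N. -/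
open scoped ENNReal

lemma sq_div_convex (a b s u t : ℝ) (hs : 0 < s) (hu : 0 < u) (ht0 : 0 ≤ t) (ht1 : t ≤ 1) :
    (t*a+(1-t)*b)^2 / (t*s+(1-t)*u) ≤ t*(a^2/s) + (1-t)*(b^2/u) := by
  have hmix : 0 < t*s+(1-t)*u := by
    rcases eq_or_lt_of_le ht0 with rfl | h
    · simpa using hu
    · nlinarith [mul_pos h hs, mul_nonneg (sub_nonneg.2 ht1) hu.le]
  rw [div_le_iff₀ hmix, ← sub_nonneg]
  have expand : (t*(a^2/s) + (1-t)*(b^2/u)) * (t*s+(1-t)*u) - (t*a+(1-t)*b)^2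
      = t*(1-t)*(a*u-b*s)^2/(s*u) := by
    field_simp
    ring
  rw [expand]
  apply div_nonneg _ (le_of_lt (mul_pos hs hu))
  exact mul_nonneg (mul_nonneg ht0 (by linarith)) (sq_nonneg _)

lemma phi_nonneg_arg (a s : ℝ) (hs : 0 < s) : 0 ≤ a ^ 2 / (2 * s) + s / 2 := by positivity

lemma phi_convex (a b s u t : ℝ) (ht0 : 0 < t) (ht1 : t < 1) :
    phi (t*a+(1-t)*b) (t*s+(1-t)*u) ≤
      ENNReal.ofReal t * phi a s + ENNReal.ofReal (1-t) * phi b u := by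
  have ht0' : (0:ℝ) < 1 - t := by linarith
  by_cases hA : phi a s = ⊤
  · have : ENNReal.ofReal t * phi a s = ⊤ := by
      rw [hA]
      exact ENNReal.mul_top (by simp only [ne_eq, ENNReal.ofReal_eq_zero, not_le]; exact ht0)
    rw [this]
    simp
  by_cases hB : phi b u = ⊤
  · have : ENNReal.ofReal (1-t) * phi b u = ⊤ := by
      rw [hB]
      exact ENNReal.mul_top (by simp only [ne_eq, ENNReal.ofReal_eq_zero, not_le]; exact ht0')
    rw [this]
    simp
  have hs : 0 < s ∨ (a = 0 ∧ s = 0) := by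
    by_contra h
    push_neg at h
    apply hA
    rw [phi, if_neg (not_lt.2 h.1), if_neg]
    rintro ⟨ha, hs0⟩
    exact h.2 ha hs0
  have hu : 0 < u ∨ (b = 0 ∧ u = 0) := by
    by_contra h
    push_neg at h
    apply hB
    rw [phi, if_neg (not_lt.2 h.1), if_neg]
    rintro ⟨hb, hu0⟩
    exact h.2 hb hu0
  rcases hs with hs | ⟨ha, hs⟩
  · rcases hu with hu | ⟨hb, hu⟩
    · -- both positive
      have hmix : 0 < t*s+(1-t)*u := by nlinarith
      simp only [phi]
      rw [if_pos hmix, if_pos hs, if_pos hu,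
        ← ENNReal.ofReal_mul ht0.le, ← ENNReal.ofReal_mul ht0'.le,
        ← ENNReal.ofReal_add (by positivity) (by positivity)]
      apply ENNReal.ofReal_le_ofReal
      have key := sq_div_convex a b s u t hs hu ht0.le ht1.le
      have e1 : (t*a+(1-t)*b)^2 / (2*(t*s+(1-t)*u)) = (t*a+(1-t)*b)^2 / (t*s+(1-t)*u) / 2 := by
        rw [div_div]
        ring_nf
      rw [e1]
      have e2 : t * (a ^ 2 / (2 * s) + s / 2) + (1 - t) * (b ^ 2 / (2 * u) + u / 2)
          = (t*(a^2/s) + (1-t)*(b^2/u))/2 + (t*s+(1-t)*u)/2 := by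
        field_simp
        ring
      rw [e2]
      gcongr
    · -- u = 0, b = 0
      subst hb hu
      have hmix : 0 < t*s+(1-t)*0 := by nlinarith
      have hzero : phi 0 0 = 0 := by simp [phi]
      rw [show t*a+(1-t)*0 = t*a from by ring, show t*s+(1-t)*0 = t*s from by ring,
        hzero, mul_zero, add_zero]
      simp only [phi]
      rw [if_pos (mul_pos ht0 hs), if_pos hs, ← ENNReal.ofReal_mul ht0.le]
      apply ENNReal.ofReal_le_ofReal
      apply le_of_eq
      field_simp
  · rcases hu with hu | ⟨hb, hu⟩
    · -- s = 0, a = 0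
      subst ha hs
      have hmix : 0 < t*0+(1-t)*u := by nlinarith
      have hzero : phi 0 0 = 0 := by simp [phi]
      rw [show t*0+(1-t)*b = (1-t)*b from by ring, show t*0+(1-t)*u = (1-t)*u from by ring,
        hzero, mul_zero, zero_add]
      simp only [phi]
      rw [if_pos (mul_pos ht0' hu), if_pos hu, ← ENNReal.ofReal_mul ht0'.le]
      apply ENNReal.ofReal_le_ofReal
      apply le_of_eq
      field_simp
    · subst ha hs hb hu
      simp [phi]

lemma tv_convex {N : ℕ} (σ₁ σ₂ : Fin N → ℝ) (t : ℝ) (ht0 : 0 ≤ t) (ht1 : t ≤ 1) :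
    tv (t • σ₁ + (1-t) • σ₂) ≤ t * tv σ₁ + (1-t) * tv σ₂ := by
  unfold tv
  rw [Finset.mul_sum, Finset.mul_sum, ← Finset.sum_add_distrib]
  apply Finset.sum_le_sum
  intro i _
  simp only [Pi.add_apply, Pi.smul_apply, smul_eq_mul]
  have e : t * σ₁ ⟨i.val + 1, by have := i.isLt; omega⟩ + (1-t) * σ₂ ⟨i.val + 1, by have := i.isLt; omega⟩
      - (t * σ₁ ⟨i.val, by have := i.isLt; omega⟩ + (1-t) * σ₂ ⟨i.val, by have := i.isLt; omega⟩)
      = t * (σ₁ ⟨i.val + 1, by have := i.isLt; omega⟩ - σ₁ ⟨i.val, by have := i.isLt; omega⟩)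
      + (1-t) * (σ₂ ⟨i.val + 1, by have := i.isLt; omega⟩ - σ₂ ⟨i.val, by have := i.isLt; omega⟩) := by
    ring
  rw [e]
  calc |t * (σ₁ ⟨i.val + 1, by have := i.isLt; omega⟩ - σ₁ ⟨i.val, by have := i.isLt; omega⟩)
      + (1-t) * (σ₂ ⟨i.val + 1, by have := i.isLt; omega⟩ - σ₂ ⟨i.val, by have := i.isLt; omega⟩)|
      ≤ |t * (σ₁ ⟨i.val + 1, by have := i.isLt; omega⟩ - σ₁ ⟨i.val, by have := i.isLt; omega⟩)|
      + |(1-t) * (σ₂ ⟨i.val + 1, by have := i.isLt; omega⟩ - σ₂ ⟨i.val, by have := i.isLt; omega⟩)| :=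
        abs_add_le _ _
    _ = _ := by
        rw [abs_mul, abs_mul, abs_of_nonneg ht0, abs_of_nonneg (by linarith : (0:ℝ) ≤ 1 - t)]

/-- For every α ≥ 0, the LOP-ℓ2/ℓ1 penalty ψ_α is convex on ℝ^N
(in the extended-real-valued sense). -/
theorem psi_convex (N : ℕ) (α : ℝ) (hα : 0 ≤ α) :
    ∀ (x y : Fin N → ℝ) (t : ℝ), 0 ≤ t → t ≤ 1 →
      psi α (t • x + (1 - t) • y) ≤
        ENNReal.ofReal t * psi α x + ENNReal.ofReal (1 - t) * psi α y := by
  intro x y t ht0 ht1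
  rcases eq_or_lt_of_le ht0 with rfl | ht0'
  · simp
  rcases eq_or_lt_of_le ht1 with rfl | ht1'
  · simp
  have hct0 : ENNReal.ofReal t ≠ 0 := by simp [ht0']
  have hcs0 : ENNReal.ofReal (1-t) ≠ 0 := by
    simp only [ne_eq, ENNReal.ofReal_eq_zero, not_le]
    linarith
  have hpsi : ∀ z : Fin N → ℝ, psi α z
      = ⨅ σ : {σ : Fin N → ℝ // tv σ ≤ α}, ∑ n : Fin N, phi (z n) (σ.1 n) := by
    intro z
    rw [psi, iInf_subtype]
  have hne : Nonempty {σ : Fin N → ℝ // tv σ ≤ α} := ⟨⟨0, by simp [tv, hα]⟩⟩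
  rw [hpsi x, hpsi y,
    ENNReal.mul_iInf_of_ne hct0 ENNReal.ofReal_ne_top,
    ENNReal.mul_iInf_of_ne hcs0 ENNReal.ofReal_ne_top,
    ENNReal.iInf_add]
  apply le_iInf
  intro σ₁
  rw [ENNReal.add_iInf]
  apply le_iInf
  intro σ₂
  have htv : tv (t • σ₁.1 + (1-t) • σ₂.1) ≤ α := by
    calc tv (t • σ₁.1 + (1-t) • σ₂.1) ≤ t * tv σ₁.1 + (1-t) * tv σ₂.1 :=
          tv_convex _ _ t ht0 ht1
      _ ≤ t * α + (1-t) * α := by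
          gcongr
          · exact σ₁.2
          · exact σ₂.2
      _ = α := by ring
  calc psi α (t • x + (1 - t) • y)
      ≤ ∑ n : Fin N, phi ((t • x + (1 - t) • y) n) ((t • σ₁.1 + (1-t) • σ₂.1) n) := by
        rw [psi]
        exact iInf_le_of_le (t • σ₁.1 + (1-t) • σ₂.1) (iInf_le _ htv)
    _ ≤ ∑ n : Fin N, (ENNReal.ofReal t * phi (x n) (σ₁.1 n)
        + ENNReal.ofReal (1-t) * phi (y n) (σ₂.1 n)) := by
        apply Finset.sum_le_sum
        intro n _
        simpa using phi_convex (x n) (y n) (σ₁.1 n) (σ₂.1 n) t ht0' ht1'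
    _ = ENNReal.ofReal t * ∑ n : Fin N, phi (x n) (σ₁.1 n)
        + ENNReal.ofReal (1-t) * ∑ n : Fin N, phi (y n) (σ₂.1 n) := by
        rw [Finset.sum_add_distrib, Finset.mul_sum, Finset.mul_sum]
end

section
/- The nonconvex penalty ψ_K^{nc}(x), defined as the minimum over block partitions of {1,…,N} into at most K contiguous blocks of ∑_k √|B_k|·‖x_{B_k}‖₂, equals the minimum over σ ∈ ℝ^N with ‖Dσ‖₀ ≤ K−1 of ∑_{n=1}^N φ(x_n, σ_n). -/
open scoped ENNReal

/-- ψ_K^{nc}(x): minimum over partitions of {0,…,N-1} into at most K contiguous blocks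
(described by cut points 0 = c 0 < c 1 < ⋯ < c j = N) of ∑_k √|B_k|·‖x_{B_k}‖₂. -/
noncomputable def psiNC (K N : ℕ) (x : ℕ → ℝ) : ℝ≥0∞ :=
  ⨅ (j : ℕ) (_ : 1 ≤ j ∧ j ≤ K) (c : ℕ → ℕ)
    (_ : c 0 = 0 ∧ c j = N ∧ StrictMonoOn c (Set.Iic j)),
    ENNReal.ofReal (∑ k ∈ Finset.range j,
      Real.sqrt ((c (k + 1) : ℝ) - (c k : ℝ)) *
        Real.sqrt (∑ n ∈ Finset.Ico (c k) (c (k + 1)), x n ^ 2))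

lemma phi_pos' (x σ : ℝ) (h : 0 < σ) : phi x σ = ENNReal.ofReal (x ^ 2 / (2 * σ) + σ / 2) := by
  simp [phi, h]

lemma sum_blocks' (c : ℕ → ℕ) (f : ℕ → ℝ≥0∞) :
    ∀ j : ℕ, (∀ k < j, c k ≤ c (k + 1)) →
      ∑ k ∈ Finset.range j, ∑ n ∈ Finset.Ico (c k) (c (k + 1)), f n
        = ∑ n ∈ Finset.Ico (c 0) (c j), f n := by
  intro j
  induction j with
  | zero => simp
  | succ j ih =>
    intro h
    have hmono : ∀ k ≤ j, c 0 ≤ c k := by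
      intro k hk
      induction k with
      | zero => exact le_refl _
      | succ k ihk => exact le_trans (ihk (by omega)) (h k (by omega))
    rw [Finset.sum_range_succ, ih (fun k hk => h k (by omega)),
      Finset.sum_Ico_consecutive f (hmono j le_rfl) (h j (by omega))]

lemma const_of_step' (σ : ℕ → ℝ) (a b : ℕ) (h : ∀ i, a ≤ i → i + 1 < b → σ (i + 1) = σ i) :
    ∀ n, a ≤ n → n < b → σ n = σ a := by
  intro n
  induction n with
  | zero => intro h1 _; simp [show a = 0 by omega]
  | succ n ih =>
    intro h1 h2
    rcases Nat.eq_or_lt_of_le h1 with h3 | h3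
    · rw [← h3]
    · rw [h n (by omega) h2, ih (by omega) (by omega)]

lemma block_ge' (x : ℕ → ℝ) (σ₀ : ℝ) (a b : ℕ) (hab : a < b) :
    ENNReal.ofReal (Real.sqrt ((b : ℝ) - a) * Real.sqrt (∑ n ∈ Finset.Ico a b, x n ^ 2))
      ≤ ∑ n ∈ Finset.Ico a b, phi (x n) σ₀ := by
  set s : ℝ := ∑ n ∈ Finset.Ico a b, x n ^ 2 with hs
  have hsnn : 0 ≤ s := Finset.sum_nonneg fun n _ => sq_nonneg _
  rcases lt_trichotomy σ₀ 0 with hσ | hσ | hσ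
  · have htop : phi (x a) σ₀ = ⊤ := by
      simp [phi, not_lt.mpr hσ.le, hσ.ne]
    have : ∑ n ∈ Finset.Ico a b, phi (x n) σ₀ = ⊤ :=
      ENNReal.sum_eq_top.mpr ⟨a, Finset.mem_Ico.mpr ⟨le_rfl, hab⟩, htop⟩
    simp [this]
  · by_cases hx : ∀ n ∈ Finset.Ico a b, x n = 0
    · have hs0 : s = 0 := Finset.sum_eq_zero fun n hn => by rw [hx n hn]; ring
      rw [hs0, Real.sqrt_zero, mul_zero, ENNReal.ofReal_zero]
      exact bot_le
    · push_neg at hx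
      obtain ⟨n0, hn0, hxn0⟩ := hx
      have : ∑ n ∈ Finset.Ico a b, phi (x n) σ₀ = ⊤ :=
        ENNReal.sum_eq_top.mpr ⟨n0, hn0, by simp [phi, hσ, hxn0]⟩
      simp [this]
  · have hsum : ∑ n ∈ Finset.Ico a b, phi (x n) σ₀
        = ENNReal.ofReal (s / (2 * σ₀) + (b - a : ℕ) * (σ₀ / 2)) := by
      rw [show s / (2 * σ₀) + ((b - a : ℕ) : ℝ) * (σ₀ / 2)
            = ∑ n ∈ Finset.Ico a b, (x n ^ 2 / (2 * σ₀) + σ₀ / 2) by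
          rw [Finset.sum_add_distrib, ← Finset.sum_div, Finset.sum_const, Nat.card_Ico,
            nsmul_eq_mul]]
      rw [ENNReal.ofReal_sum_of_nonneg fun n _ => by positivity]
      exact Finset.sum_congr rfl fun n _ => phi_pos' _ _ hσ
    rw [hsum]
    apply ENNReal.ofReal_le_ofReal
    have hm : ((b - a : ℕ) : ℝ) = (b : ℝ) - a := by
      rw [Nat.cast_sub hab.le]
    rw [hm]
    set m : ℝ := (b : ℝ) - a with hmdef
    have hmnn : (0:ℝ) ≤ m := by
      have : (a:ℝ) ≤ b := Nat.cast_le.mpr hab.le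
      linarith
    have h1 : Real.sqrt s * Real.sqrt s = s := Real.mul_self_sqrt hsnn
    have h2 : Real.sqrt m * Real.sqrt m = m := Real.mul_self_sqrt hmnn
    have h3 : 0 ≤ Real.sqrt s := Real.sqrt_nonneg _
    have h4 : 0 ≤ Real.sqrt m := Real.sqrt_nonneg _
    have h2σ : (0:ℝ) < 2 * σ₀ := by positivity
    have hre : s / (2 * σ₀) + m * (σ₀ / 2) = (s + m * σ₀ * σ₀) / (2 * σ₀) := by
      field_simp
    rw [hre, le_div_iff₀ h2σ]
    have e : (Real.sqrt s - Real.sqrt m * σ₀) * (Real.sqrt s - Real.sqrt m * σ₀)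
        = s - Real.sqrt m * Real.sqrt s * (2 * σ₀) + m * σ₀ * σ₀ := by
      linear_combination h1 + (σ₀ * σ₀) * h2
    linarith [mul_self_nonneg (Real.sqrt s - Real.sqrt m * σ₀)]

lemma block_eq' (x : ℕ → ℝ) (a b : ℕ) (hab : a < b) :
    ∑ n ∈ Finset.Ico a b,
        phi (x n) (Real.sqrt (∑ n ∈ Finset.Ico a b, x n ^ 2) / Real.sqrt ((b : ℝ) - a))
      = ENNReal.ofReal (Real.sqrt ((b : ℝ) - a) * Real.sqrt (∑ n ∈ Finset.Ico a b, x n ^ 2)) := by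
  set s : ℝ := ∑ n ∈ Finset.Ico a b, x n ^ 2 with hs
  have hsnn : 0 ≤ s := Finset.sum_nonneg fun n _ => sq_nonneg _
  have hmpos : (0:ℝ) < (b : ℝ) - a := by
    have : (a:ℝ) < b := Nat.cast_lt.mpr hab
    linarith
  set m : ℝ := (b : ℝ) - a with hmdef
  have h4 : 0 < Real.sqrt m := Real.sqrt_pos.mpr hmpos
  rcases eq_or_lt_of_le hsnn with hs0 | hs0
  · have hx : ∀ n ∈ Finset.Ico a b, x n ^ 2 = 0 := by
      intro n hn
      have := Finset.sum_eq_zero_iff_of_nonneg (fun n _ => sq_nonneg (x n)) |>.mp hs0.symm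
      exact this n hn
    rw [← hs0, Real.sqrt_zero, zero_div, mul_zero, ENNReal.ofReal_zero]
    refine Finset.sum_eq_zero fun n hn => ?_
    have : x n = 0 := by
      have := hx n hn; nlinarith [sq_nonneg (x n)]
    simp [phi, this]
  · have h3 : 0 < Real.sqrt s := Real.sqrt_pos.mpr hs0
    set σ₀ : ℝ := Real.sqrt s / Real.sqrt m with hσ₀
    have hσpos : 0 < σ₀ := div_pos h3 h4
    have hsum : ∑ n ∈ Finset.Ico a b, phi (x n) σ₀
        = ENNReal.ofReal (s / (2 * σ₀) + (b - a : ℕ) * (σ₀ / 2)) := by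
      rw [show s / (2 * σ₀) + ((b - a : ℕ) : ℝ) * (σ₀ / 2)
            = ∑ n ∈ Finset.Ico a b, (x n ^ 2 / (2 * σ₀) + σ₀ / 2) by
          rw [Finset.sum_add_distrib, ← Finset.sum_div, Finset.sum_const, Nat.card_Ico,
            nsmul_eq_mul]]
      rw [ENNReal.ofReal_sum_of_nonneg fun n _ => by positivity]
      exact Finset.sum_congr rfl fun n _ => phi_pos' _ _ hσpos
    rw [hsum]
    congr 1
    have hm : ((b - a : ℕ) : ℝ) = m := by rw [Nat.cast_sub hab.le]
    have h1 : Real.sqrt s * Real.sqrt s = s := Real.mul_self_sqrt hsnn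
    have h2 : Real.sqrt m * Real.sqrt m = m := Real.mul_self_sqrt hmpos.le
    have key : σ₀ * Real.sqrt m = Real.sqrt s := by
      rw [hσ₀]; field_simp
    rw [hm]
    set u : ℝ := Real.sqrt s with hu
    set v : ℝ := Real.sqrt m with hv
    have hσne : σ₀ ≠ 0 := ne_of_gt hσpos
    have hvne : v ≠ 0 := ne_of_gt h4
    clear_value σ₀ u v
    clear hσ₀ hu hv hsum
    rw [← h1, ← h2, ← key]
    field_simp
    ring

/-- ψ_K^{nc}(x) equals the minimum over σ with ‖Dσ‖₀ ≤ K − 1 of ∑ φ(x_n, σ_n). -/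
theorem psiNC_eq_latent (K N : ℕ) (hK : 1 ≤ K) (hN : 1 ≤ N) (x : ℕ → ℝ) :
    psiNC K N x =
      ⨅ (σ : ℕ → ℝ)
        (_ : ((Finset.range (N - 1)).filter (fun i => σ (i + 1) ≠ σ i)).card ≤ K - 1),
        ∑ n ∈ Finset.range N, phi (x n) (σ n) := by
  apply le_antisymm
  · -- psiNC ≤ inf over σ
    refine le_iInf fun σ => le_iInf fun hσcard => ?_
    classical
    set S : Finset ℕ := (Finset.range (N - 1)).filter (fun i => σ (i + 1) ≠ σ i) with hS
    set l : List ℕ := S.sort (· ≤ ·) with hl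
    set m : ℕ := l.length with hmdef
    have hmcard : m = S.card := by rw [hmdef, hl, Finset.length_sort]
    have hsorted : l.SortedLT := by rw [hl]; exact Finset.sortedLT_sort S
    have hgetmono : StrictMono l.get := hsorted.strictMono_get
    have helem : ∀ p : Fin l.length, l.get p ∈ S := by
      intro p
      have h1 : l.get p ∈ l := l.get_mem p
      exact (Finset.mem_sort _).mp h1
    have helt : ∀ p : Fin l.length, l.get p < N - 1 := by
      intro p
      have := helem p
      rw [hS, Finset.mem_filter, Finset.mem_range] at this
      exact this.1
    set j : ℕ := m + 1 with hj
    set c : ℕ → ℕ := fun k =>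
      if k = 0 then 0 else if h : k - 1 < l.length then l.get ⟨k - 1, h⟩ + 1 else N
      with hc
    have hc0 : c 0 = 0 := by simp [hc]
    have hcj : c j = N := by
      simp only [hc, hj]
      rw [if_neg (by omega), dif_neg (by omega)]
    have hcmid : ∀ k, 1 ≤ k → k ≤ m → ∃ h : k - 1 < l.length, c k = l.get ⟨k - 1, h⟩ + 1 := by
      intro k h1 h2
      refine ⟨by omega, ?_⟩
      simp only [hc]
      rw [if_neg (by omega), dif_pos]
    have hcle : ∀ k, 1 ≤ k → k ≤ m → 1 ≤ c k ∧ c k < N := by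
      intro k h1 h2
      obtain ⟨h, hck⟩ := hcmid k h1 h2
      have := helt ⟨k - 1, h⟩
      omega
    have hmonoc : StrictMonoOn c (Set.Iic j) := by
      intro k1 hk1 k2 hk2 h12
      simp only [Set.mem_Iic] at hk1 hk2
      rcases Nat.eq_zero_or_pos k1 with h0 | h0
      · subst h0
        rw [hc0]
        rcases Nat.lt_or_ge m k2 with hm2 | hm2
        · have : k2 = j := by omega
          rw [this, hcj]; omega
        · exact lt_of_lt_of_le (by omega) (hcle k2 (by omega) hm2).1
      · rcases Nat.lt_or_ge m k2 with hm2 | hm2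
        · have hk2j : k2 = j := by omega
          rw [hk2j, hcj]
          rcases Nat.lt_or_ge m k1 with hm1 | hm1
          · omega
          · exact (hcle k1 (by omega) hm1).2
        · obtain ⟨h1, e1⟩ := hcmid k1 (by omega) (by omega)
          obtain ⟨h2, e2⟩ := hcmid k2 (by omega) hm2
          rw [e1, e2]
          have : (⟨k1 - 1, h1⟩ : Fin l.length) < ⟨k2 - 1, h2⟩ := by
            simp [Fin.lt_def]; omega
          have := hgetmono this
          omega
    have hcleN : ∀ k ≤ j, c k ≤ N := by
      intro k hk
      rcases Nat.eq_zero_or_pos k with h0 | h0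
      · subst h0; rw [hc0]; omega
      · rcases Nat.lt_or_ge m k with hm1 | hm1
        · have : k = j := by omega
          rw [this, hcj]
        · exact (hcle k (by omega) hm1).2.le
    -- σ is constant on each block
    have hconst : ∀ k < j, ∀ n, c k ≤ n → n < c (k + 1) → σ n = σ (c k) := by
      intro k hk
      refine const_of_step' σ (c k) (c (k + 1)) ?_
      intro i hi hi1
      have hiS : i ∉ S := by
        intro hiS
        have : i ∈ l := by rw [hl]; exact (Finset.mem_sort _).mpr hiS
        obtain ⟨p, hp⟩ := List.mem_iff_get.mp this
        have hcp : c (p + 1) = i + 1 := by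
          obtain ⟨h, e⟩ := hcmid (p + 1) (by omega) (by have := p.isLt; omega)
          have hfin : (⟨p + 1 - 1, h⟩ : Fin l.length) = p := Fin.ext (by simp)
          rw [e, hfin, hp]
        have hlt1 : c k < c (p + 1) := by omega
        have hlt2 : c (p + 1) < c (k + 1) := by omega
        have hk1 : k ∈ Set.Iic j := Set.mem_Iic.mpr (by omega)
        have hp1 : (p : ℕ) + 1 ∈ Set.Iic j := Set.mem_Iic.mpr (by have := p.isLt; omega)
        have hk2 : k + 1 ∈ Set.Iic j := Set.mem_Iic.mpr (by omega)
        have r1 : k < p + 1 := (hmonoc.lt_iff_lt hk1 hp1).mp hlt1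
        have r2 : (p : ℕ) + 1 < k + 1 := (hmonoc.lt_iff_lt hp1 hk2).mp hlt2
        omega
      have hirange : i ∈ Finset.range (N - 1) := by
        have := hcleN (k + 1) (by omega)
        exact Finset.mem_range.mpr (by omega)
      by_contra hne
      exact hiS (by rw [hS]; exact Finset.mem_filter.mpr ⟨hirange, hne⟩)
    have hstep : ∀ k < j, c k < c (k + 1) :=
      fun k hk => hmonoc (Set.mem_Iic.mpr (by omega)) (Set.mem_Iic.mpr (by omega))
        (Nat.lt_succ_self k)
    -- psiNC ≤ ofReal (blocksum for c)
    have hpsi : psiNC K N x ≤ ENNReal.ofReal (∑ k ∈ Finset.range j,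
        Real.sqrt ((c (k + 1) : ℝ) - (c k : ℝ)) *
          Real.sqrt (∑ n ∈ Finset.Ico (c k) (c (k + 1)), x n ^ 2)) := by
      rw [psiNC]
      refine le_trans (iInf_le _ j) ?_
      refine le_trans (iInf_le _ ⟨by omega, by omega⟩) ?_
      refine le_trans (iInf_le _ c) ?_
      exact iInf_le _ ⟨hc0, hcj, hmonoc⟩
    refine le_trans hpsi ?_
    -- blocksum ≤ ∑ phi
    rw [show Finset.range N = Finset.Ico (c 0) (c j) by rw [hc0, hcj, Finset.range_eq_Ico]]
    rw [← sum_blocks' c _ j (fun k hk => (hstep k hk).le)]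
    rw [ENNReal.ofReal_sum_of_nonneg (fun k _ => by positivity)]
    refine Finset.sum_le_sum fun k hk => ?_
    have hkj : k < j := Finset.mem_range.mp hk
    have heq : ∑ n ∈ Finset.Ico (c k) (c (k + 1)), phi (x n) (σ n)
        = ∑ n ∈ Finset.Ico (c k) (c (k + 1)), phi (x n) (σ (c k)) := by
      refine Finset.sum_congr rfl fun n hn => ?_
      rw [Finset.mem_Ico] at hn
      rw [hconst k hkj n hn.1 hn.2]
    rw [heq]
    exact block_ge' x (σ (c k)) (c k) (c (k + 1)) (hstep k hkj)
  · -- inf over σ ≤ psiNC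
    refine le_iInf fun j => le_iInf fun hj => le_iInf fun c => le_iInf fun hcprop => ?_
    obtain ⟨hj1, hjK⟩ := hj
    obtain ⟨hc0, hcj, hmono⟩ := hcprop
    classical
    set bi : ℕ → ℕ := fun n => Nat.findGreatest (fun k => c k ≤ n) (j - 1) with hbi
    set bval : ℕ → ℝ := fun k =>
      Real.sqrt (∑ n ∈ Finset.Ico (c k) (c (k + 1)), x n ^ 2) /
        Real.sqrt ((c (k + 1) : ℝ) - c k) with hbval
    set σ : ℕ → ℝ := fun n => bval (bi n) with hσ
    have hcmono : MonotoneOn c (Set.Iic j) := hmono.monotoneOn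
    have hstep : ∀ k < j, c k < c (k + 1) :=
      fun k hk => hmono (Set.mem_Iic.mpr (by omega)) (Set.mem_Iic.mpr (by omega))
        (Nat.lt_succ_self k)
    have bi_eq : ∀ k n, k < j → c k ≤ n → n < c (k + 1) → bi n = k := by
      intro k n hkj hle hlt
      rw [hbi]
      refine Nat.findGreatest_eq_iff.mpr ⟨by omega, fun _ => hle, ?_⟩
      intro mm hmk hmj hcm
      have : c (k + 1) ≤ c mm :=
        hcmono (Set.mem_Iic.mpr (by omega)) (Set.mem_Iic.mpr (by omega)) (by omega)
      omega
    have bi_spec : ∀ n, n < N → c (bi n) ≤ n ∧ n < c (bi n + 1) ∧ bi n < j := by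
      intro n hn
      have hfg : Nat.findGreatest (fun k => c k ≤ n) (j - 1) = bi n := rfl
      obtain ⟨hle, hP, hmax⟩ := Nat.findGreatest_eq_iff.mp hfg
      have h1 : c (bi n) ≤ n := by
        rcases Nat.eq_zero_or_pos (bi n) with h0 | h0
        · rw [h0, hc0]; omega
        · exact hP (by omega)
      have h2 : n < c (bi n + 1) := by
        rcases Nat.lt_or_ge (bi n) (j - 1) with hlt | hge
        · by_contra hcon
          push_neg at hcon
          exact hmax (Nat.lt_succ_self _) (by omega) hcon
        · have hbn : bi n = j - 1 := by omega
          rw [hbn, show j - 1 + 1 = j by omega, hcj]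
          exact hn
      exact ⟨h1, h2, by omega⟩
    -- card condition for σ
    have hσcard : ((Finset.range (N - 1)).filter (fun i => σ (i + 1) ≠ σ i)).card ≤ K - 1 := by
      have hsub : (Finset.range (N - 1)).filter (fun i => σ (i + 1) ≠ σ i) ⊆
          (Finset.Ico 1 j).image (fun k => c k - 1) := by
        intro i hi
        rw [Finset.mem_filter, Finset.mem_range] at hi
        obtain ⟨hiN, hiσ⟩ := hi
        obtain ⟨hle, hlt, hbij⟩ := bi_spec i (by omega)
        have hieq : i + 1 = c (bi i + 1) := by
          rcases Nat.lt_or_ge (i + 1) (c (bi i + 1)) with h | h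
          · exfalso
            have : bi (i + 1) = bi i := bi_eq (bi i) (i + 1) hbij (by omega) h
            exact hiσ (show bval (bi (i + 1)) = bval (bi i) from by rw [this])
          · omega
        have hbij1 : bi i + 1 < j := by
          by_contra hcon
          have : bi i + 1 = j := by omega
          rw [this, hcj] at hieq
          omega
        refine Finset.mem_image.mpr ⟨bi i + 1, Finset.mem_Ico.mpr ⟨by omega, hbij1⟩, by omega⟩
      calc ((Finset.range (N - 1)).filter (fun i => σ (i + 1) ≠ σ i)).card
          ≤ ((Finset.Ico 1 j).image (fun k => c k - 1)).card := Finset.card_le_card hsub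
        _ ≤ (Finset.Ico 1 j).card := Finset.card_image_le
        _ = j - 1 := Nat.card_Ico 1 j
        _ ≤ K - 1 := by omega
    refine le_trans (iInf_le _ σ) (le_trans (iInf_le _ hσcard) ?_)
    -- ∑ phi = ofReal blocksum
    rw [show Finset.range N = Finset.Ico (c 0) (c j) by rw [hc0, hcj, Finset.range_eq_Ico]]
    rw [← sum_blocks' c _ j (fun k hk => (hstep k hk).le)]
    rw [ENNReal.ofReal_sum_of_nonneg (fun k _ => by positivity)]
    refine le_of_eq (Finset.sum_congr rfl fun k hk => ?_)
    have hkj : k < j := Finset.mem_range.mp hk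
    have heq : ∑ n ∈ Finset.Ico (c k) (c (k + 1)), phi (x n) (σ n)
        = ∑ n ∈ Finset.Ico (c k) (c (k + 1)), phi (x n) (bval k) := by
      refine Finset.sum_congr rfl fun n hn => ?_
      rw [Finset.mem_Ico] at hn
      show phi (x n) (bval (bi n)) = phi (x n) (bval k)
      rw [bi_eq k n hkj hn.1 hn.2]
    rw [heq]
    exact block_eq' x (c k) (c (k + 1)) (hstep k hkj)
end

section
/- If B^T B is nonsingular (B ∈ ℝ^{J×N}), then the GME-LOP-ℓ2/ℓ1 penalty Ψ_{B,α}(x) = ψ_α(x) − min_{v ∈ ℝ^N} [ψ_α(v) + ½‖B(x − v)‖₂²] is a bounded function on ℝ^N, for any α ≥ 0. -/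
open scoped ENNReal

/-- Real-valued LOP-ℓ2/ℓ1 penalty (its value is finite for all x). -/
noncomputable def psiR {N : ℕ} (α : ℝ) (x : Fin N → ℝ) : ℝ := (psi α x).toReal

/-- The GME-LOP-ℓ2/ℓ1 penalty Ψ_{B,α}. -/
noncomputable def gme {N J : ℕ} (B : Matrix (Fin J) (Fin N) ℝ) (α : ℝ)
    (x : Fin N → ℝ) : ℝ :=
  psiR α x - ⨅ v : Fin N → ℝ,
    (psiR α v + (1 / 2) * ∑ j : Fin J, (B.mulVec (x - v) j) ^ 2)

lemma tv_shift {N : ℕ} (σ : Fin N → ℝ) (c : ℝ) : tv (fun n => σ n + c) = tv σ := by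
  simp [tv]

lemma phi_shift (x v s c : ℝ) (hc : 0 < c) :
    phi x (s + c) ≤ phi v s + ENNReal.ofReal ((x - v) ^ 2 / (2 * c) + c / 2) := by
  unfold phi
  by_cases hs : 0 < s
  · rw [if_pos hs, if_pos (by linarith)]
    rw [← ENNReal.ofReal_add (by positivity) (by positivity)]
    apply ENNReal.ofReal_le_ofReal
    have key : x ^ 2 / (2 * (s + c)) ≤ v ^ 2 / (2 * s) + (x - v) ^ 2 / (2 * c) := by
      rw [div_add_div _ _ (by positivity) (by positivity),
        div_le_div_iff₀ (by positivity) (by positivity)]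
      nlinarith [sq_nonneg (v * c - (x - v) * s), mul_pos hs hc, sq_nonneg v, sq_nonneg (x - v)]
    linarith
  · rw [if_neg hs]
    by_cases h0 : v = 0 ∧ s = 0
    · obtain ⟨hv, hs0⟩ := h0
      subst hv; subst hs0
      rw [if_pos (show (0:ℝ) < 0 + c by linarith), if_pos ⟨rfl, rfl⟩, zero_add]
      norm_num
    · rw [if_neg h0, top_add]
      exact le_top

lemma psi_le_add {N : ℕ} (α c : ℝ) (hc : 0 < c) (x v : Fin N → ℝ) :
    psi α x ≤ psi α v + ENNReal.ofReal (∑ n, ((x n - v n) ^ 2 / (2 * c) + c / 2)) := by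
  conv_rhs => rw [psi]
  rw [ENNReal.iInf_add]
  refine le_iInf fun σ => ?_
  rw [ENNReal.iInf_add]
  refine le_iInf fun hσ => ?_
  calc psi α x ≤ ∑ n, phi (x n) (σ n + c) := by
        refine iInf_le_of_le (fun n => σ n + c) (iInf_le_of_le ?_ le_rfl)
        rw [tv_shift]; exact hσ
    _ ≤ ∑ n, (phi (v n) (σ n) + ENNReal.ofReal ((x n - v n) ^ 2 / (2 * c) + c / 2)) :=
        Finset.sum_le_sum fun n _ => phi_shift (x n) (v n) (σ n) c hc
    _ = (∑ n, phi (v n) (σ n)) +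
        ∑ n, ENNReal.ofReal ((x n - v n) ^ 2 / (2 * c) + c / 2) := Finset.sum_add_distrib
    _ = _ := by
        rw [ENNReal.ofReal_sum_of_nonneg fun n _ => by positivity]

lemma psi_zero {N : ℕ} (α : ℝ) (hα : 0 ≤ α) : psi α (0 : Fin N → ℝ) = 0 := by
  refine le_antisymm ?_ zero_le
  refine iInf_le_of_le 0 (iInf_le_of_le ?_ ?_)
  · simpa [tv] using hα
  · simp [phi]

lemma psi_ne_top {N : ℕ} (α : ℝ) (hα : 0 ≤ α) (x : Fin N → ℝ) : psi α x ≠ ⊤ := by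
  have h := psi_le_add α 1 one_pos x 0
  rw [psi_zero α hα, zero_add] at h
  exact ne_top_of_le_ne_top ENNReal.ofReal_ne_top h

lemma psiR_le {N : ℕ} (α : ℝ) (hα : 0 ≤ α) (c : ℝ) (hc : 0 < c) (x v : Fin N → ℝ) :
    psiR α x ≤ psiR α v + ((∑ n, (x n - v n) ^ 2) / (2 * c) + N * c / 2) := by
  have h := psi_le_add α c hc x v
  have hsum : (0:ℝ) ≤ ∑ n, ((x n - v n) ^ 2 / (2 * c) + c / 2) := by positivity
  have hmono := ENNReal.toReal_mono
    (ENNReal.add_ne_top.2 ⟨psi_ne_top α hα v, ENNReal.ofReal_ne_top⟩) h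
  rw [ENNReal.toReal_add (psi_ne_top α hα v) ENNReal.ofReal_ne_top,
    ENNReal.toReal_ofReal hsum] at hmono
  have heq : ∑ n, ((x n - v n) ^ 2 / (2 * c) + c / 2)
      = (∑ n, (x n - v n) ^ 2) / (2 * c) + N * c / 2 := by
    rw [Finset.sum_add_distrib, Finset.sum_const, Finset.card_univ, Fintype.card_fin,
      ← Finset.sum_div, nsmul_eq_mul]
    ring
  rw [heq] at hmono
  exact hmono

lemma exists_m {N J : ℕ} (B : Matrix (Fin J) (Fin N) ℝ)
    (hB : IsUnit (B.transpose * B)) :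
    ∃ m : ℝ, 0 < m ∧ ∀ d : Fin N → ℝ,
      m * ∑ n, d n ^ 2 ≤ ∑ j, (B.mulVec d j) ^ 2 := by
  obtain ⟨u, hu⟩ := hB
  have hinj : ∀ d : Fin N → ℝ, B.mulVec d = 0 → d = 0 := by
    intro d hd
    have h1 : (B.transpose * B).mulVec d = 0 := by
      rw [← Matrix.mulVec_mulVec, hd, Matrix.mulVec_zero]
    have h2 : ((↑u⁻¹ : Matrix (Fin N) (Fin N) ℝ) * (B.transpose * B)).mulVec d = 0 := by
      rw [← Matrix.mulVec_mulVec, h1, Matrix.mulVec_zero]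
    rwa [← hu, Units.inv_mul, Matrix.one_mulVec] at h2
  set T : EuclideanSpace ℝ (Fin N) →ₗ[ℝ] EuclideanSpace ℝ (Fin J) :=
    Matrix.toEuclideanLin B with hT
  have hker : LinearMap.ker T = ⊥ := by
    rw [LinearMap.ker_eq_bot']
    intro d hd
    have : B.mulVec ((WithLp.equiv 2 (Fin N → ℝ)) d) = 0 := by
      have := congrArg (WithLp.equiv 2 (Fin J → ℝ)) hd
      simpa [hT] using this
    have h0 := hinj _ this
    have : (WithLp.equiv 2 (Fin N → ℝ)) d = 0 := h0
    simpa using congrArg (WithLp.equiv 2 (Fin N → ℝ)).symm this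
  obtain ⟨K, hK, hanti⟩ := T.exists_antilipschitzWith hker
  refine ⟨((K : ℝ) + 1)⁻¹ ^ 2, by positivity, fun d => ?_⟩
  set dE : EuclideanSpace ℝ (Fin N) := (WithLp.equiv 2 (Fin N → ℝ)).symm d with hdE
  have hnd : ‖dE‖ ^ 2 = ∑ n, d n ^ 2 := by
    rw [EuclideanSpace.norm_eq, Real.sq_sqrt (by positivity)]
    simp [hdE, sq_abs]
  have hnT : ‖T dE‖ ^ 2 = ∑ j, (B.mulVec d j) ^ 2 := by
    rw [EuclideanSpace.norm_eq, Real.sq_sqrt (by positivity)]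
    simp [hT, hdE, sq_abs]
  have hle : ‖dE‖ ≤ (K : ℝ) * ‖T dE‖ := by
    have := hanti.le_mul_dist dE 0
    simpa [dist_eq_norm] using this
  have hKn : (0:ℝ) ≤ (K:ℝ) := K.2
  have h3 : ‖dE‖ ^ 2 ≤ ((K : ℝ) + 1) ^ 2 * ‖T dE‖ ^ 2 := by
    nlinarith [norm_nonneg dE, norm_nonneg (T dE)]
  rw [← hnd, ← hnT, inv_pow, inv_mul_le_iff₀ (by positivity)]
  linarith

/-- If BᵀB is nonsingular, then Ψ_{B,α} is bounded on ℝ^N for any α ≥ 0. -/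
theorem gme_bounded (N J : ℕ) (B : Matrix (Fin J) (Fin N) ℝ)
    (hB : IsUnit (B.transpose * B)) (α : ℝ) (hα : 0 ≤ α) :
    ∃ C : ℝ, ∀ x : Fin N → ℝ, |gme B α x| ≤ C := by
  obtain ⟨m, hm, hmB⟩ := exists_m B hB
  refine ⟨N / (2 * m), fun x => ?_⟩
  have hC : (0:ℝ) ≤ N / (2 * m) := by positivity
  set F : (Fin N → ℝ) → ℝ := fun v =>
    psiR α v + (1 / 2) * ∑ j : Fin J, (B.mulVec (x - v) j) ^ 2 with hF
  have hlow : ∀ v, psiR α x - N / (2 * m) ≤ F v := by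
    intro v
    have h6 := psiR_le α hα m⁻¹ (by positivity) x v
    have hBm := hmB (x - v)
    have hS : ∀ n, (x - v) n = x n - v n := fun n => rfl
    have hsum : ∑ n, ((x - v) n) ^ 2 = ∑ n, (x n - v n) ^ 2 := by
      simp [hS]
    rw [hsum] at hBm
    set S := ∑ n, (x n - v n) ^ 2 with hSdef
    have hS0 : 0 ≤ S := by positivity
    have hdiv : S / (2 * m⁻¹) = m * S / 2 := by
      field_simp
    have hdiv2 : (N:ℝ) * m⁻¹ / 2 = N / (2 * m) := by
      field_simp
    rw [hdiv, hdiv2] at h6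
    simp only [hF]
    nlinarith [hBm]
  have hbdd : BddBelow (Set.range F) := by
    refine ⟨psiR α x - N / (2 * m), ?_⟩
    rintro y ⟨v, rfl⟩
    exact hlow v
  have h1 : (⨅ v, F v) ≤ psiR α x := by
    have := ciInf_le hbdd x
    simpa [hF, Matrix.mulVec_zero] using this
  have h2 : psiR α x - N / (2 * m) ≤ ⨅ v, F v := le_ciInf hlow
  have hg : gme B α x = psiR α x - ⨅ v, F v := rfl
  rw [hg, abs_le]
  constructor <;> [linarith; linarith]
end

section
/- If B^T B = (ω/λ)(A^T A + μ P) with ω ∈ [0,1], λ > 0, μ > 0, P positive definite, and Ψ_{B,α}(x) = ψ_α(x) − min_v [ψ_α(v) + ½‖B(x−v)‖₂²] with ψ_α convex, then the objective x ↦ ½‖Ax − r‖₂² + (μ/2)‖x − x̄‖_P² + λ Ψ_{B,α}(x) is convex on ℝ^N. -/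
open Matrix

private lemma sq_comb (t s a b : ℝ) (hts : t + s = 1) :
    (t * a + s * b) ^ 2 = t * a ^ 2 + s * b ^ 2 - t * s * (a - b) ^ 2 := by
  linear_combination (a ^ 2 * t + b ^ 2 * s) * hts

private lemma sum_sq_comb {K : ℕ} (t s : ℝ) (hts : t + s = 1) (u w : Fin K → ℝ) :
    ∑ i, (t * u i + s * w i) ^ 2
      = t * ∑ i, u i ^ 2 + s * ∑ i, w i ^ 2 - t * s * ∑ i, (u i - w i) ^ 2 := by
  rw [Finset.mul_sum, Finset.mul_sum, Finset.mul_sum, ← Finset.sum_add_distrib,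
    ← Finset.sum_sub_distrib]
  exact Finset.sum_congr rfl fun i _ => sq_comb t s (u i) (w i) hts

private lemma quad_comb {N : ℕ} (P : Matrix (Fin N) (Fin N) ℝ) (t s : ℝ) (hts : t + s = 1)
    (a b : Fin N → ℝ) :
    (t • a + s • b) ⬝ᵥ P.mulVec (t • a + s • b)
      = t * (a ⬝ᵥ P.mulVec a) + s * (b ⬝ᵥ P.mulVec b)
        - t * s * ((a - b) ⬝ᵥ P.mulVec (a - b)) := by
  simp only [mulVec_add, mulVec_smul, mulVec_sub, add_dotProduct, dotProduct_add,
    smul_dotProduct, dotProduct_smul, sub_dotProduct, dotProduct_sub, smul_eq_mul]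
  linear_combination (t * (a ⬝ᵥ P.mulVec a) + s * (b ⬝ᵥ P.mulVec b)) * hts

private lemma dot_transpose_mul {m n : ℕ} (C : Matrix (Fin m) (Fin n) ℝ) (w : Fin n → ℝ) :
    w ⬝ᵥ (Cᵀ * C).mulVec w = ∑ i, (C.mulVec w i) ^ 2 := by
  rw [← mulVec_mulVec, dotProduct_mulVec, vecMul_transpose]
  simp [dotProduct, sq]

/-- If the infimand is unbounded below at one point, it is unbounded below at every point. -/
private lemma bdd_transfer {N J : ℕ} (B : Matrix (Fin J) (Fin N) ℝ) (ψ : (Fin N → ℝ) → ℝ)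
    (hψ : ConvexOn ℝ Set.univ ψ) (x₁ x : Fin N → ℝ)
    (h : ¬ BddBelow (Set.range fun v => ψ v + (1 / 2) * ∑ j, (B.mulVec (x₁ - v) j) ^ 2)) :
    ¬ BddBelow (Set.range fun v => ψ v + (1 / 2) * ∑ j, (B.mulVec (x - v) j) ^ 2) := by
  rintro ⟨c, hc⟩
  set x₂ : Fin N → ℝ := (2 : ℝ) • x - x₁ with hx₂
  rw [not_bddBelow_iff] at h
  obtain ⟨b, ⟨v₁, rfl⟩, hb⟩ := h (2 * c - ψ x₂)
  set v : Fin N → ℝ := (1 / 2 : ℝ) • v₁ + (1 / 2 : ℝ) • x₂ with hv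
  have hxv : x - v = (1 / 2 : ℝ) • (x₁ - v₁) := by
    rw [hv, hx₂]; funext i
    simp only [Pi.sub_apply, Pi.add_apply, Pi.smul_apply, smul_eq_mul]
    ring
  have hψv : ψ v ≤ (1 / 2) * ψ v₁ + (1 / 2) * ψ x₂ := by
    have := hψ.2 (Set.mem_univ v₁) (Set.mem_univ x₂) (by norm_num : (0:ℝ) ≤ 1/2)
      (by norm_num : (0:ℝ) ≤ 1/2) (by norm_num : (1/2 : ℝ) + 1/2 = 1)
    simpa [hv, smul_eq_mul] using this
  have hsum : ∑ j, (B.mulVec (x - v) j) ^ 2 = (1 / 4) * ∑ j, (B.mulVec (x₁ - v₁) j) ^ 2 := by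
    rw [hxv, Finset.mul_sum]
    refine Finset.sum_congr rfl fun j _ => ?_
    rw [mulVec_smul]
    simp [smul_eq_mul]; ring
  have hsq : 0 ≤ ∑ j, (B.mulVec (x₁ - v₁) j) ^ 2 :=
    Finset.sum_nonneg fun j _ => sq_nonneg _
  have hmem := hc (Set.mem_range_self (f := fun v => ψ v + (1 / 2) * ∑ j,
    (B.mulVec (x - v) j) ^ 2) v)
  rw [hsum] at hmem
  nlinarith [hb, hψv, hmem]

/-- Convexity of `φ_v`. -/
private lemma phi_convex_s16 {M N J : ℕ}
    (A : Matrix (Fin M) (Fin N) ℝ) (r : Fin M → ℝ) (xbar : Fin N → ℝ)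
    (P : Matrix (Fin N) (Fin N) ℝ) (hP : P.PosDef)
    (B : Matrix (Fin J) (Fin N) ℝ)
    (ω lam μ : ℝ) (hω0 : 0 ≤ ω) (hω1 : ω ≤ 1) (hlam : 0 < lam) (hμ : 0 < μ)
    (hB : B.transpose * B = (ω / lam) • (A.transpose * A + μ • P))
    (ψ : (Fin N → ℝ) → ℝ) (hψ : ConvexOn ℝ Set.univ ψ)
    (x y v : Fin N → ℝ) (t s : ℝ) (ht : 0 ≤ t) (hs : 0 ≤ s) (hts : t + s = 1) :
    (1 / 2) * ∑ m, (A.mulVec (t • x + s • y) m - r m) ^ 2 +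
      (μ / 2) * ((t • x + s • y - xbar) ⬝ᵥ P.mulVec (t • x + s • y - xbar)) +
      lam * ψ (t • x + s • y) -
      lam * (ψ v + (1 / 2) * ∑ j, (B.mulVec (t • x + s • y - v) j) ^ 2)
    ≤ t * ((1 / 2) * ∑ m, (A.mulVec x m - r m) ^ 2 +
        (μ / 2) * ((x - xbar) ⬝ᵥ P.mulVec (x - xbar)) + lam * ψ x -
        lam * (ψ v + (1 / 2) * ∑ j, (B.mulVec (x - v) j) ^ 2)) +
      s * ((1 / 2) * ∑ m, (A.mulVec y m - r m) ^ 2 +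
        (μ / 2) * ((y - xbar) ⬝ᵥ P.mulVec (y - xbar)) + lam * ψ y -
        lam * (ψ v + (1 / 2) * ∑ j, (B.mulVec (y - v) j) ^ 2)) := by
  set z : Fin N → ℝ := t • x + s • y with hz
  -- A-part
  have eA : ∑ m, (A.mulVec z m - r m) ^ 2
      = t * ∑ m, (A.mulVec x m - r m) ^ 2 + s * ∑ m, (A.mulVec y m - r m) ^ 2
        - t * s * ∑ m, (A.mulVec (x - y) m) ^ 2 := by
    have h1 : ∀ m, A.mulVec z m - r m
        = t * (A.mulVec x m - r m) + s * (A.mulVec y m - r m) := by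
      intro m
      rw [hz, mulVec_add, mulVec_smul, mulVec_smul]
      simp only [Pi.add_apply, Pi.smul_apply, smul_eq_mul]
      have : t * r m + s * r m = r m := by rw [← add_mul, hts, one_mul]
      linarith [this]
    have h2 : ∀ m, (A.mulVec x m - r m) - (A.mulVec y m - r m) = A.mulVec (x - y) m := by
      intro m; rw [mulVec_sub]; simp
    have h3 : ∑ m, ((A.mulVec x m - r m) - (A.mulVec y m - r m)) ^ 2
        = ∑ m, (A.mulVec (x - y) m) ^ 2 :=
      Finset.sum_congr rfl fun m _ => by rw [h2 m]
    calc ∑ m, (A.mulVec z m - r m) ^ 2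
        = ∑ m, (t * (A.mulVec x m - r m) + s * (A.mulVec y m - r m)) ^ 2 :=
          Finset.sum_congr rfl fun m _ => by rw [h1 m]
      _ = _ := by rw [sum_sq_comb t s hts, h3]
  -- P-part
  have eP : (z - xbar) ⬝ᵥ P.mulVec (z - xbar)
      = t * ((x - xbar) ⬝ᵥ P.mulVec (x - xbar)) + s * ((y - xbar) ⬝ᵥ P.mulVec (y - xbar))
        - t * s * ((x - y) ⬝ᵥ P.mulVec (x - y)) := by
    have h1 : z - xbar = t • (x - xbar) + s • (y - xbar) := by
      rw [hz]; funext i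
      simp only [Pi.sub_apply, Pi.add_apply, Pi.smul_apply, smul_eq_mul]
      have : t * xbar i + s * xbar i = xbar i := by rw [← add_mul, hts, one_mul]
      linarith [this]
    have h2 : (x - xbar) - (y - xbar) = x - y := by abel
    rw [h1, quad_comb P t s hts, h2]
  -- B-part
  have eB : ∑ j, (B.mulVec (z - v) j) ^ 2
      = t * ∑ j, (B.mulVec (x - v) j) ^ 2 + s * ∑ j, (B.mulVec (y - v) j) ^ 2
        - t * s * ∑ j, (B.mulVec (x - y) j) ^ 2 := by
    have h1 : ∀ j, B.mulVec (z - v) j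
        = t * (B.mulVec (x - v) j) + s * (B.mulVec (y - v) j) := by
      intro j
      rw [mulVec_sub, mulVec_sub, mulVec_sub, hz, mulVec_add, mulVec_smul, mulVec_smul]
      simp only [Pi.sub_apply, Pi.add_apply, Pi.smul_apply, smul_eq_mul]
      have : t * B.mulVec v j + s * B.mulVec v j = B.mulVec v j := by
        rw [← add_mul, hts, one_mul]
      linarith [this]
    have h2 : ∀ j, (B.mulVec (x - v) j) - (B.mulVec (y - v) j) = B.mulVec (x - y) j := by
      intro j
      rw [mulVec_sub, mulVec_sub, mulVec_sub]
      simp only [Pi.sub_apply]; ring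
    have h3 : ∑ j, ((B.mulVec (x - v) j) - (B.mulVec (y - v) j)) ^ 2
        = ∑ j, (B.mulVec (x - y) j) ^ 2 :=
      Finset.sum_congr rfl fun j _ => by rw [h2 j]
    calc ∑ j, (B.mulVec (z - v) j) ^ 2
        = ∑ j, (t * (B.mulVec (x - v) j) + s * (B.mulVec (y - v) j)) ^ 2 :=
          Finset.sum_congr rfl fun j _ => by rw [h1 j]
      _ = _ := by rw [sum_sq_comb t s hts, h3]
  -- relation between B and A, P on x - y
  have hBxy : lam * ∑ j, (B.mulVec (x - y) j) ^ 2
      = ω * (∑ m, (A.mulVec (x - y) m) ^ 2 + μ * ((x - y) ⬝ᵥ P.mulVec (x - y))) := by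
    have h1 : ∑ j, (B.mulVec (x - y) j) ^ 2 = (x - y) ⬝ᵥ (Bᵀ * B).mulVec (x - y) :=
      (dot_transpose_mul B (x - y)).symm
    have h2 : ∑ m, (A.mulVec (x - y) m) ^ 2 = (x - y) ⬝ᵥ (Aᵀ * A).mulVec (x - y) :=
      (dot_transpose_mul A (x - y)).symm
    rw [h1, h2, hB]
    rw [smul_mulVec, dotProduct_smul, add_mulVec, dotProduct_add, smul_mulVec,
      dotProduct_smul]
    simp only [smul_eq_mul]
    field_simp
  -- nonnegativity facts
  have hSA : 0 ≤ ∑ m, (A.mulVec (x - y) m) ^ 2 := Finset.sum_nonneg fun m _ => sq_nonneg _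
  have hSP : 0 ≤ (x - y) ⬝ᵥ P.mulVec (x - y) := by
    have := hP.posSemidef.dotProduct_mulVec_nonneg (x - y)
    simpa using this
  have hψz : ψ z ≤ t * ψ x + s * ψ y := by
    have := hψ.2 (Set.mem_univ x) (Set.mem_univ y) ht hs hts
    simpa [hz, smul_eq_mul] using this
  have hψslack : 0 ≤ lam * (t * ψ x + s * ψ y - ψ z) :=
    mul_nonneg hlam.le (by linarith)
  have hkey : 0 ≤ t * s * ((1 - ω) * (∑ m, (A.mulVec (x - y) m) ^ 2
      + μ * ((x - y) ⬝ᵥ P.mulVec (x - y)))) := by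
    have h3 : 0 ≤ ∑ m, (A.mulVec (x - y) m) ^ 2 + μ * ((x - y) ⬝ᵥ P.mulVec (x - y)) := by
      nlinarith
    exact mul_nonneg (mul_nonneg ht hs) (mul_nonneg (by linarith) h3)
  have hB2 : t * s * (lam * ∑ j, (B.mulVec (x - y) j) ^ 2)
      = t * s * (ω * (∑ m, (A.mulVec (x - y) m) ^ 2 + μ * ((x - y) ⬝ᵥ P.mulVec (x - y)))) := by
    rw [hBxy]
  have hvs : t * (lam * ψ v) + s * (lam * ψ v) = lam * ψ v := by
    rw [← add_mul, hts, one_mul]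
  rw [eA, eP, eB]
  nlinarith [hkey, hψslack, hB2, hvs]

/-- If BᵀB = (ω/λ)(AᵀA + μP) with ω ∈ [0,1], λ > 0, μ > 0 and P positive definite,
then x ↦ ½‖Ax − r‖₂² + (μ/2)‖x − x̄‖_P² + λΨ_{B,α}(x) is convex, where
Ψ_{B,α}(x) = ψ_α(x) − inf_v [ψ_α(v) + ½‖B(x−v)‖₂²] for a convex ψ_α. -/
theorem objective_convex (M N J : ℕ)
    (A : Matrix (Fin M) (Fin N) ℝ) (r : Fin M → ℝ) (xbar : Fin N → ℝ)
    (P : Matrix (Fin N) (Fin N) ℝ) (hP : P.PosDef)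
    (B : Matrix (Fin J) (Fin N) ℝ)
    (ω lam μ : ℝ) (hω0 : 0 ≤ ω) (hω1 : ω ≤ 1) (hlam : 0 < lam) (hμ : 0 < μ)
    (hB : B.transpose * B = (ω / lam) • (A.transpose * A + μ • P))
    (ψ : (Fin N → ℝ) → ℝ) (hψ : ConvexOn ℝ Set.univ ψ) :
    ConvexOn ℝ Set.univ (fun x : Fin N → ℝ =>
      (1 / 2) * ∑ m : Fin M, (A.mulVec x m - r m) ^ 2 +
        (μ / 2) * ((x - xbar) ⬝ᵥ P.mulVec (x - xbar)) +
        lam * (ψ x - ⨅ v : Fin N → ℝ,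
          (ψ v + (1 / 2) * ∑ j : Fin J, (B.mulVec (x - v) j) ^ 2))) := by
  refine ⟨convex_univ, ?_⟩
  intro x _ y _ t s ht hs hts
  simp only [smul_eq_mul]
  set g : (Fin N → ℝ) → (Fin N → ℝ) → ℝ :=
    fun w v => ψ v + (1 / 2) * ∑ j, (B.mulVec (w - v) j) ^ 2 with hg
  set Q : (Fin N → ℝ) → ℝ := fun w =>
    (1 / 2) * ∑ m, (A.mulVec w m - r m) ^ 2 +
      (μ / 2) * ((w - xbar) ⬝ᵥ P.mulVec (w - xbar)) with hQ
  have hphi := fun v => phi_convex_s16 A r xbar P hP B ω lam μ hω0 hω1 hlam hμ hB ψ hψ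
    x y v t s ht hs hts
  by_cases hbdd : BddBelow (Set.range fun v => g x v)
  · -- bounded below everywhere
    have hbddy : BddBelow (Set.range fun v => g y v) := by
      by_contra h
      exact (bdd_transfer B ψ hψ y x h) hbdd
    have hIx : ∀ v, (⨅ v', g x v') ≤ g x v := fun v => ciInf_le hbdd v
    have hIy : ∀ v, (⨅ v', g y v') ≤ g y v := fun v => ciInf_le hbddy v
    set c : ℝ := t * (Q x + lam * (ψ x - ⨅ v, g x v)) +
      s * (Q y + lam * (ψ y - ⨅ v, g y v)) with hc
    have main : ∀ v : Fin N → ℝ,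
        (Q (t • x + s • y) + lam * ψ (t • x + s • y) - c) / lam ≤ g (t • x + s • y) v := by
      intro v
      rw [div_le_iff₀ hlam]
      have h1 := hphi v
      have h2 := mul_le_mul_of_nonneg_left (hIx v) (mul_nonneg hlam.le ht)
      have h3 := mul_le_mul_of_nonneg_left (hIy v) (mul_nonneg hlam.le hs)
      simp only [hQ, hg, hc] at *
      nlinarith [h1, h2, h3]
    have hle : (Q (t • x + s • y) + lam * ψ (t • x + s • y) - c) / lam
        ≤ ⨅ v, g (t • x + s • y) v := le_ciInf main
    have hlam' : lam ≠ 0 := ne_of_gt hlam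
    have := mul_le_mul_of_nonneg_left hle hlam.le
    rw [mul_div_cancel₀ _ hlam'] at this
    calc Q (t • x + s • y) + lam * (ψ (t • x + s • y) - ⨅ v, g (t • x + s • y) v)
        ≤ c := by linarith
      _ = _ := by rw [hc]
  · -- unbounded below everywhere: all infima are the junk value 0
    have hzx : (⨅ v, g x v) = 0 := Real.iInf_of_not_bddBelow hbdd
    have hzy : (⨅ v, g y v) = 0 :=
      Real.iInf_of_not_bddBelow (bdd_transfer B ψ hψ x y hbdd)
    have hzz : (⨅ v, g (t • x + s • y) v) = 0 :=
      Real.iInf_of_not_bddBelow (bdd_transfer B ψ hψ x (t • x + s • y) hbdd)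
    have hconv : Q (t • x + s • y) + lam * ψ (t • x + s • y)
        ≤ t * (Q x + lam * ψ x) + s * (Q y + lam * ψ y) := by
      have h := phi_convex_s16 A r xbar P hP (0 : Matrix (Fin J) (Fin N) ℝ) 0 lam μ le_rfl
        (by norm_num) hlam hμ (by simp) ψ hψ x y x t s ht hs hts
      simp only [zero_mulVec, Pi.zero_apply, ne_eq, OfNat.ofNat_ne_zero,
        not_false_eq_true, zero_pow, Finset.sum_const_zero, mul_zero, add_zero, hQ] at h ⊢
      have hvx : t * (lam * ψ x) + s * (lam * ψ x) = lam * ψ x := by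
        rw [← add_mul, hts, one_mul]
      nlinarith [h, hvx]
    show Q (t • x + s • y) + lam * (ψ (t • x + s • y) - ⨅ v, g (t • x + s • y) v) ≤
      t * (Q x + lam * (ψ x - ⨅ v, g x v)) + s * (Q y + lam * (ψ y - ⨅ v, g y v))
    rw [hzx, hzy, hzz]; simp only [sub_zero]
    calc Q (t • x + s • y) + lam * (ψ (t • x + s • y))
        ≤ t * (Q x + lam * ψ x) + s * (Q y + lam * ψ y) := hconv
      _ = _ := by ring
end
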